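/- arXiv:2104.07121 — 3 statements merged into one kernel-verified Lean document; each statement's English description precedes it below -/
import Mathlib

section
/- Let G be a simple graph, fix a vertex P of G, and let D be a P-reduced divisor on G of rank zero. Then there exists a vertex Q ≠ P such that |D − Q| = ∅ (i.e., the set of proofs of D contains a vertex different from P). -/
open scoped Classical

/-- A graph: a finite connected multigraph with no loop edges, given by a symmetric
edge-multiplicity function on a finite nonempty vertex type. -/
structure Multigraph where
  V : Type
  [fintypeV : Fintype V]
  [decEqV : DecidableEq V]
  [nonemptyV : Nonempty V]
  adj : V → V → ℕ
  adj_symm : ∀ u v, adj u v = adj v u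
  adj_loopless : ∀ v, adj v v = 0
  conn : ∀ u v, Relation.ReflTransGen (fun a b => adj a b ≠ 0) u v

attribute [instance] Multigraph.fintypeV Multigraph.decEqV Multigraph.nonemptyV

namespace Multigraph

variable (G : Multigraph)

/-- A simple graph: no multiple edges and more than one vertex. -/
def Simple : Prop :=
  (∀ u v, G.adj u v ≤ 1) ∧ 1 < Fintype.card G.V

/-- The degree of a divisor. -/
def deg (D : G.V → ℤ) : ℤ := ∑ v, D v

/-- A divisor is effective if all its coefficients are nonnegative. -/
def Effective (D : G.V → ℤ) : Prop := ∀ v, 0 ≤ D v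

/-- The Laplacian of an integer-valued function on the vertices. -/
def lap (f : G.V → ℤ) : G.V → ℤ := fun v => ∑ w, (G.adj v w : ℤ) * (f v - f w)

/-- The linear system `|D|` is nonempty, i.e. `D` is linearly equivalent to an
effective divisor. -/
def LinNonempty (D : G.V → ℤ) : Prop :=
  ∃ f : G.V → ℤ, G.Effective (D - G.lap f)

/-- The Baker–Norine rank of a divisor: `-1` if `|D| = ∅`, otherwise the maximal
`k` such that `|D - E| ≠ ∅` for every effective divisor `E` of degree `k`. -/
noncomputable def rank (D : G.V → ℤ) : ℤ :=
  if G.LinNonempty D then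
    ((sSup {k : ℕ | ∀ E : G.V → ℤ, G.Effective E → G.deg E = (k : ℤ) →
        G.LinNonempty (D - E)} : ℕ) : ℤ)
  else -1

/-- The divisor `n • P`. -/
def pt (P : G.V) (n : ℤ) : G.V → ℤ := fun v => if v = P then n else 0

/-- The rank Weierstrass set of `G` at `P`. -/
def Hr (P : G.V) : Set ℕ :=
  {n : ℕ | G.rank (G.pt P ((n : ℤ) - 1)) < G.rank (G.pt P (n : ℤ))}

/-- The functional Weierstrass set of `G` at `P`: pole orders at `P` of functions
with a unique pole at `P`. -/
def Hf (P : G.V) : Set ℕ :=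
  {n : ℕ | ∃ f : G.V → ℤ, G.lap f P = -(n : ℤ) ∧ ∀ Q, Q ≠ P → 0 ≤ G.lap f Q}

/-- The number of edges joining `Q` to vertices outside `A`. -/
def outdeg (A : Finset G.V) (Q : G.V) : ℕ := ∑ R ∈ Aᶜ, G.adj Q R

/-- A divisor is `P`-reduced. -/
def Reduced (P : G.V) (D : G.V → ℤ) : Prop :=
  (∀ Q, Q ≠ P → 0 ≤ D Q) ∧
  ∀ A : Finset G.V, A.Nonempty → P ∉ A → ∃ Q ∈ A, D Q < (G.outdeg A Q : ℤ)

/-- `G` is the graph `B_n` with two vertices joined by `n` parallel edges. -/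
def IsBanana (n : ℕ) : Prop :=
  Fintype.card G.V = 2 ∧ ∀ u v, u ≠ v → G.adj u v = n

/-- `G` is the complete graph on `n` vertices. -/
def IsComplete (n : ℕ) : Prop :=
  Fintype.card G.V = n ∧ ∀ u v, u ≠ v → G.adj u v = 1

/-- `G` is the complete bipartite graph with parts `A` (of size `m`) and its
complement (of size `n`). -/
def IsCompleteBipartite (A : Finset G.V) (m n : ℕ) : Prop :=
  A.card = m ∧ Aᶜ.card = n ∧
  ∀ u v, G.adj u v = if (u ∈ A ∧ v ∉ A) ∨ (u ∉ A ∧ v ∈ A) then 1 else 0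

/-- `λ_Q(k)`: the least `n` with `r(nQ) = k`. -/
noncomputable def lam (Q : G.V) (k : ℕ) : ℕ :=
  sInf {n : ℕ | G.rank (G.pt Q (n : ℤ)) = (k : ℤ)}

end Multigraph

/-- `G` is the vertex gluing of `G₁` and `G₂` identifying `P₁` and `P₂` into `P`. -/
def IsVertexGluing (G G₁ G₂ : Multigraph) (P : G.V) (P₁ : G₁.V) (P₂ : G₂.V) : Prop :=
  ∃ (ι₁ : G₁.V → G.V) (ι₂ : G₂.V → G.V),
    Function.Injective ι₁ ∧ Function.Injective ι₂ ∧
    ι₁ P₁ = P ∧ ι₂ P₂ = P ∧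
    (∀ a b, ι₁ a = ι₂ b → ι₁ a = P) ∧
    (∀ v : G.V, (∃ a, ι₁ a = v) ∨ (∃ b, ι₂ b = v)) ∧
    (∀ a b, G.adj (ι₁ a) (ι₁ b) = G₁.adj a b) ∧
    (∀ a b, G.adj (ι₂ a) (ι₂ b) = G₂.adj a b) ∧
    (∀ a b, ι₁ a ≠ P → ι₂ b ≠ P → G.adj (ι₁ a) (ι₂ b) = 0)

namespace Multigraph

variable (G : Multigraph)

lemma deg_lap_aux (f : G.V → ℤ) : G.deg (G.lap f) = 0 := by
  have h2 : G.deg (G.lap f) + G.deg (G.lap f) = 0 := by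
    unfold deg lap
    nth_rewrite 2 [Finset.sum_comm]
    rw [← Finset.sum_add_distrib]
    apply Finset.sum_eq_zero; intro v _
    rw [← Finset.sum_add_distrib]
    apply Finset.sum_eq_zero; intro w _
    rw [G.adj_symm w v]; ring
  linarith

lemma deg_sub_aux (D E : G.V → ℤ) : G.deg (D - E) = G.deg D - G.deg E := by
  unfold deg; simp [Finset.sum_sub_distrib]

lemma deg_pt_aux (v : G.V) (n : ℤ) : G.deg (G.pt v n) = n := by
  unfold deg pt; simp

lemma eff_deg_nonneg_aux (E : G.V → ℤ) (hE : G.Effective E) : 0 ≤ G.deg E :=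
  Finset.sum_nonneg fun v _ => hE v

lemma exists_maxset_aux (f : G.V → ℤ) :
    ∃ A : Finset G.V, A.Nonempty ∧ ∀ v ∈ A, (G.outdeg A v : ℤ) ≤ G.lap f v := by
  have hne : (Finset.univ : Finset G.V).Nonempty := Finset.univ_nonempty
  set M := Finset.univ.sup' hne f with hMdef
  refine ⟨Finset.univ.filter (fun v => f v = M), ?_, ?_⟩
  · obtain ⟨v, hv, hvM⟩ := Finset.exists_mem_eq_sup' hne f
    exact ⟨v, Finset.mem_filter.2 ⟨Finset.mem_univ v, hvM.symm⟩⟩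
  · intro v hv
    have hfv : f v = M := (Finset.mem_filter.1 hv).2
    unfold outdeg lap
    rw [Finset.compl_filter, Nat.cast_sum, Finset.sum_filter]
    apply Finset.sum_le_sum
    intro w _
    by_cases hw : f w = M
    · simp [hw, hfv]
    · have h1 : f w < M := lt_of_le_of_ne (Finset.le_sup' f (Finset.mem_univ w)) hw
      have h2 : (1:ℤ) ≤ f v - f w := by omega
      rw [if_pos hw]
      calc (G.adj v w : ℤ) = (G.adj v w : ℤ) * 1 := by ring
        _ ≤ _ := mul_le_mul_of_nonneg_left h2 (by positivity)

lemma reduced_linNonempty_nonneg_aux (P : G.V) (D : G.V → ℤ)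
    (hD : G.Reduced P D) (h : G.LinNonempty D) : 0 ≤ D P := by
  obtain ⟨f, hf⟩ := h
  obtain ⟨A, hAne, hA⟩ := G.exists_maxset_aux f
  by_cases hP : P ∈ A
  · have h1 := hf P
    have h2 := hA P hP
    have h3 : (0:ℤ) ≤ (G.outdeg A P : ℤ) := Nat.cast_nonneg _
    simp only [Pi.sub_apply] at h1
    linarith
  · exfalso
    obtain ⟨v, hv, hlt⟩ := hD.2 A hAne hP
    have h1 := hf v
    have h2 := hA v hv
    simp only [Pi.sub_apply] at h1
    linarith

end Multigraph

/-- A `P`-reduced divisor of rank zero on a simple graph has a proof which is a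
vertex different from `P`. -/
theorem reduced_rank_zero_proof_ne (G : Multigraph) (hG : G.Simple) (P : G.V)
    (D : G.V → ℤ) (hD : G.Reduced P D) (hr : G.rank D = 0) :
    ∃ Q : G.V, Q ≠ P ∧ ¬ G.LinNonempty (D - G.pt Q 1) := by
  classical
  -- Step 1: |D| ≠ ∅
  have hLN : G.LinNonempty D := by
    by_contra h
    rw [Multigraph.rank, if_neg h] at hr
    omega
  rw [Multigraph.rank, if_pos hLN] at hr
  set S := {k : ℕ | ∀ E : G.V → ℤ, G.Effective E → G.deg E = (k : ℤ) →
      G.LinNonempty (D - E)} with hSdef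
  have hsup : sSup S = 0 := by exact_mod_cast hr
  -- Step 2: S is bounded above
  have hbdd : BddAbove S := by
    refine ⟨(G.deg D).toNat, fun k hk => ?_⟩
    by_contra hk'
    push_neg at hk'
    have hkD : G.deg D < (k:ℤ) := by
      have h1 : ((G.deg D).toNat : ℤ) < (k:ℤ) := by exact_mod_cast hk'
      have h2 := Int.self_le_toNat (G.deg D)
      linarith
    obtain ⟨v⟩ : Nonempty G.V := inferInstance
    have hEeff : G.Effective (G.pt v (k:ℤ)) := by
      intro u; unfold Multigraph.pt; split <;> positivity
    obtain ⟨f, hf⟩ := hk (G.pt v (k:ℤ)) hEeff (G.deg_pt_aux v (k:ℤ))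
    have hdeg := G.eff_deg_nonneg_aux _ hf
    rw [G.deg_sub_aux, G.deg_sub_aux, G.deg_lap_aux, G.deg_pt_aux] at hdeg
    linarith
  -- Step 3: 1 ∉ S, so there is a proof Q₀
  have h1S : 1 ∉ S := by
    intro h1
    have := le_csSup hbdd h1
    omega
  simp only [hSdef, Set.mem_setOf_eq] at h1S
  push_neg at h1S
  obtain ⟨E, hEeff, hEdeg, hnl⟩ := h1S
  -- E is a single point
  obtain ⟨Q₀, hQ₀⟩ : ∃ Q₀ : G.V, 0 < E Q₀ := by
    by_contra h
    push_neg at h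
    have : G.deg E ≤ 0 := Finset.sum_nonpos fun v _ => h v
    rw [hEdeg] at this; omega
  have hErest : ∀ v, v ≠ Q₀ → E v = 0 := by
    intro v hv
    have hsum : E Q₀ + ∑ u ∈ Finset.univ.erase Q₀, E u = (1:ℤ) := by
      rw [Finset.add_sum_erase _ E (Finset.mem_univ Q₀)]
      exact hEdeg
    have hvle : E v ≤ ∑ u ∈ Finset.univ.erase Q₀, E u :=
      Finset.single_le_sum (fun u _ => hEeff u)
        (Finset.mem_erase.2 ⟨hv, Finset.mem_univ v⟩)
    have := hEeff v
    omega
  have hEQ₀ : E Q₀ = 1 := by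
    have hsum : E Q₀ + ∑ u ∈ Finset.univ.erase Q₀, E u = (1:ℤ) := by
      rw [Finset.add_sum_erase _ E (Finset.mem_univ Q₀)]
      exact hEdeg
    have : ∑ u ∈ Finset.univ.erase Q₀, E u = 0 :=
      Finset.sum_eq_zero fun u hu => hErest u (Finset.mem_erase.1 hu).1
    omega
  have hEpt : E = G.pt Q₀ 1 := by
    funext v
    unfold Multigraph.pt
    split
    · next h => rw [h]; exact hEQ₀
    · next h => exact hErest v h
  rw [hEpt] at hnl
  -- Step 4: if Q₀ ≠ P we are done
  by_cases hQP : Q₀ = P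
  · subst hQP
    -- D Q₀ = 0
    have hDP : D Q₀ = 0 := by
      have h1 : 0 ≤ D Q₀ := G.reduced_linNonempty_nonneg_aux Q₀ D hD hLN
      by_contra h
      have h2 : 1 ≤ D Q₀ := by omega
      apply hnl
      refine ⟨0, fun v => ?_⟩
      have hlap0 : G.lap 0 v = 0 := by unfold Multigraph.lap; simp
      simp only [Pi.sub_apply, hlap0, Multigraph.pt]
      split
      · next hv => rw [hv]; omega
      · next hv =>
        have := hD.1 v hv
        omega
    -- find a neighbor Q of P=Q₀ with D Q = 0 and adj Q Q₀ = 1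
    have hAne : (Finset.univ.erase Q₀).Nonempty := by
      rw [← Finset.card_pos, Finset.card_erase_of_mem (Finset.mem_univ Q₀),
        Finset.card_univ]
      have := hG.2
      omega
    obtain ⟨Q, hQmem, hQlt⟩ := hD.2 (Finset.univ.erase Q₀) hAne
      (fun h => (Finset.mem_erase.1 h).1 rfl)
    have hQne : Q ≠ Q₀ := (Finset.mem_erase.1 hQmem).1
    have houtQ : G.outdeg (Finset.univ.erase Q₀) Q = G.adj Q Q₀ := by
      unfold Multigraph.outdeg
      rw [Finset.compl_erase, Finset.compl_univ]
      simp
    rw [houtQ] at hQlt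
    have hDQnn : 0 ≤ D Q := hD.1 Q hQne
    have hadj1 : G.adj Q Q₀ = 1 := by
      have := hG.1 Q Q₀
      omega
    have hDQ0 : D Q = 0 := by
      rw [hadj1] at hQlt
      omega
    -- show |D - Q| = ∅
    refine ⟨Q, hQne, ?_⟩
    rintro ⟨f, hf⟩
    obtain ⟨A, hAne', hA⟩ := G.exists_maxset_aux f
    by_cases hPA : Q₀ ∈ A
    · -- outdeg A Q₀ = 0, so Q ∈ A, contradiction at Q
      have h1 := hA Q₀ hPA
      have h2 := hf Q₀
      simp only [Pi.sub_apply] at h2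
      have hpt0 : G.pt Q 1 Q₀ = 0 := by
        unfold Multigraph.pt
        rw [if_neg (fun h => hQne h.symm)]
      rw [hpt0] at h2
      have hout0 : G.outdeg A Q₀ = 0 := by
        have : (G.outdeg A Q₀ : ℤ) ≤ 0 := by omega
        exact_mod_cast (by omega : (G.outdeg A Q₀ : ℤ) = 0)
      have hQA : Q ∈ A := by
        by_contra hQA
        have hz : G.adj Q₀ Q = 0 := by
          have := (Finset.sum_eq_zero_iff).1 hout0 Q (Finset.mem_compl.2 hQA)
          exact this
        rw [G.adj_symm] at hz
        omega
      have h3 := hA Q hQA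
      have h4 := hf Q
      simp only [Pi.sub_apply] at h4
      have hpt1 : G.pt Q 1 Q = 1 := by unfold Multigraph.pt; rw [if_pos rfl]
      rw [hpt1, hDQ0] at h4
      have : (0:ℤ) ≤ (G.outdeg A Q : ℤ) := Nat.cast_nonneg _
      linarith
    · obtain ⟨v, hvA, hvlt⟩ := hD.2 A hAne' hPA
      have h1 := hA v hvA
      have h2 := hf v
      simp only [Pi.sub_apply] at h2
      have hptnn : 0 ≤ G.pt Q 1 v := by
        unfold Multigraph.pt; split <;> omega
      linarith
  · exact ⟨Q₀, hQP, hnl⟩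
end

section
/- Let n, m ≥ 1 and let K_{m,n} be the complete bipartite graph with parts of sizes m and n. For every vertex P of degree n (i.e., a vertex in the part of size m), the functional Weierstrass set of K_{m,n} at P is H_f(P) = nℕ ∪ (n(m−1) + ℕ) = { nk : k ∈ ℕ } ∪ { t ∈ ℕ : t ≥ n(m−1) }. -/
open scoped Classical

lemma lap_of_mem (G : Multigraph) (A : Finset G.V) (m n : ℕ)
    (hG : G.IsCompleteBipartite A m n) (f : G.V → ℤ) (v : G.V) (hv : v ∈ A) :
    G.lap f v = (n : ℤ) * f v - ∑ w ∈ Aᶜ, f w := by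
  obtain ⟨hA, hAc, hadj⟩ := hG
  unfold Multigraph.lap
  have key : ∀ w : G.V, (G.adj v w : ℤ) * (f v - f w)
      = if w ∈ Aᶜ then f v - f w else 0 := by
    intro w
    rw [hadj]
    by_cases hw : w ∈ A <;> simp [hv, hw]
  rw [Finset.sum_congr rfl fun w _ => key w, Finset.sum_ite_mem,
    Finset.univ_inter, Finset.sum_sub_distrib, Finset.sum_const, hAc]
  push_cast
  ring

lemma lap_of_not_mem (G : Multigraph) (A : Finset G.V) (m n : ℕ)
    (hG : G.IsCompleteBipartite A m n) (f : G.V → ℤ) (v : G.V) (hv : v ∉ A) :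
    G.lap f v = (m : ℤ) * f v - ∑ w ∈ A, f w := by
  obtain ⟨hA, hAc, hadj⟩ := hG
  unfold Multigraph.lap
  have key : ∀ w : G.V, (G.adj v w : ℤ) * (f v - f w)
      = if w ∈ A then f v - f w else 0 := by
    intro w
    rw [hadj]
    by_cases hw : w ∈ A <;> simp [hv, hw]
  rw [Finset.sum_congr rfl fun w _ => key w, Finset.sum_ite_mem,
    Finset.univ_inter, Finset.sum_sub_distrib, Finset.sum_const, hA]
  push_cast
  ring

/-- The functional Weierstrass set of `K_{m,n}` at a vertex of degree `n` is
`nℕ ∪ (n(m-1) + ℕ)`. -/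
theorem Hf_completeBipartite (m n : ℕ) (hm : 1 ≤ m) (hn : 1 ≤ n) (G : Multigraph)
    (A : Finset G.V) (hG : G.IsCompleteBipartite A m n) (P : G.V) (hP : P ∈ A) :
    G.Hf P = {x : ℕ | (∃ k : ℕ, x = n * k) ∨ n * (m - 1) ≤ x} := by
  have hA : A.card = m := hG.1
  have hAc : (Aᶜ : Finset G.V).card = n := hG.2.1
  ext x
  simp only [Multigraph.Hf, Set.mem_setOf_eq]
  constructor
  · rintro ⟨f, hp, hq⟩
    set SB := ∑ w ∈ Aᶜ, f w with hSBdef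
    set SA := ∑ w ∈ A, f w with hSAdef
    have hBne : (Aᶜ : Finset G.V).Nonempty := by
      rw [← Finset.card_pos, hAc]; omega
    obtain ⟨v₀, hv₀B, hmin⟩ := Finset.exists_min_image Aᶜ f hBne
    set c := f v₀ with hcdef
    have hv₀P : v₀ ≠ P := by
      intro h; rw [h] at hv₀B; exact (Finset.mem_compl.mp hv₀B) hP
    have hxeq : (x : ℤ) = SB - n * f P := by
      have := lap_of_mem G A m n hG f P hP
      rw [hp] at this; linarith
    have hSB : (n : ℤ) * c ≤ SB := by
      have := Finset.card_nsmul_le_sum Aᶜ f c (fun w hw => hmin w hw)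
      rw [hAc] at this
      simpa [nsmul_eq_mul] using this
    have hSA : SA ≤ (m : ℤ) * c := by
      have h0 := hq v₀ hv₀P
      rw [lap_of_not_mem G A m n hG f v₀ (Finset.mem_compl.mp hv₀B)] at h0
      linarith
    by_cases hdvd : (n : ℤ) ∣ (SB - n * c)
    · left
      have hdx : (n : ℤ) ∣ (x : ℤ) := by
        obtain ⟨t, ht⟩ := hdvd
        exact ⟨t + c - f P, by rw [hxeq]; linarith [ht]⟩
      obtain ⟨k, hk⟩ := (Int.natCast_dvd_natCast).mp hdx
      exact ⟨k, hk⟩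
    · right
      have he1 : 1 ≤ SB - n * c := by
        rcases lt_or_eq_of_le hSB with h | h
        · omega
        · exact absurd (by rw [← h]; simp : (n : ℤ) ∣ (SB - n * c)) hdvd
      -- every vertex of A other than P has f value ≥ c + 1
      have hfA : ∀ v ∈ A.erase P, c + 1 ≤ f v := by
        intro v hv
        have hvP : v ≠ P := (Finset.mem_erase.mp hv).1
        have hvA : v ∈ A := (Finset.mem_erase.mp hv).2
        have h0 := hq v hvP
        rw [lap_of_mem G A m n hG f v hvA] at h0
        by_contra hc
        push_neg at hc
        have : f v ≤ c := by omega
        have : (n : ℤ) * f v ≤ n * c :=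
          mul_le_mul_of_nonneg_left this (by positivity)
        omega
      have hsumA : ((m : ℤ) - 1) * (c + 1) ≤ ∑ v ∈ A.erase P, f v := by
        have := Finset.card_nsmul_le_sum (A.erase P) f (c + 1) hfA
        rw [Finset.card_erase_of_mem hP, hA] at this
        have hcast : (((m - 1 : ℕ) : ℤ)) = (m : ℤ) - 1 := by
          rw [Nat.cast_sub hm]; norm_num
        rw [nsmul_eq_mul, hcast] at this
        exact this
      have hSAeq : SA = f P + ∑ v ∈ A.erase P, f v := by
        rw [hSAdef, ← Finset.add_sum_erase A f hP]
      have hfP : f P ≤ c - ((m : ℤ) - 1) := by nlinarith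
      have hxge : (n : ℤ) * ((m : ℤ) - 1) + 1 ≤ (x : ℤ) := by nlinarith
      have : ((n * (m - 1) : ℕ) : ℤ) ≤ (x : ℤ) := by
        rw [Nat.cast_mul, Nat.cast_sub hm]
        push_cast
        linarith
      exact_mod_cast this
  · rintro (⟨k, rfl⟩ | hx)
    · -- pole of order n*k : take f = -k at P, 0 elsewhere
      refine ⟨fun v => if v = P then -(k : ℤ) else 0, ?_, ?_⟩
      · rw [lap_of_mem G A m n hG _ P hP]
        have hSB0 : ∑ w ∈ Aᶜ, (if w = P then -(k : ℤ) else 0) = 0 := by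
          apply Finset.sum_eq_zero
          intro w hw
          rw [if_neg]
          intro h; rw [h] at hw; exact (Finset.mem_compl.mp hw) hP
        rw [hSB0]
        simp only [if_pos rfl]
        push_cast
        ring
      · intro Q hQ
        by_cases hQA : Q ∈ A
        · rw [lap_of_mem G A m n hG _ Q hQA]
          have hSB0 : ∑ w ∈ Aᶜ, (if w = P then -(k : ℤ) else 0) = 0 := by
            apply Finset.sum_eq_zero
            intro w hw
            rw [if_neg]
            intro h; rw [h] at hw; exact (Finset.mem_compl.mp hw) hP
          rw [hSB0, if_neg hQ]
          simp
        · rw [lap_of_not_mem G A m n hG _ Q hQA]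
          have hSAk : ∑ w ∈ A, (if w = P then -(k : ℤ) else 0) = -(k : ℤ) := by
            rw [Finset.sum_ite_eq' A P (fun _ => -(k : ℤ)), if_pos hP]
          have hQP : Q ≠ P := fun h => hQA (h ▸ hP)
          rw [hSAk, if_neg hQP]
          simp
    · -- x ≥ n(m-1)
      set r := x - n * (m - 1) with hrdef
      have hxr : x = n * (m - 1) + r := by omega
      set j := r % n with hjdef
      set k := r / n with hkdef
      have hj : j < n := Nat.mod_lt _ hn
      have hr : n * k + j = r := Nat.div_add_mod r n
      have hjn : j ≤ n := le_of_lt hj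
      obtain ⟨S, hS, hScard⟩ :=
        Finset.exists_subset_card_eq (s := (Aᶜ : Finset G.V)) (n := n - j) (by omega)
      set f : G.V → ℤ :=
        fun v => if v = P then -((m : ℤ) + k) else if v ∈ S then -1 else 0 with hfdef
      have hPnS : ∀ v ∈ A, v ∉ S := fun v hv hvS =>
        (Finset.mem_compl.mp (hS hvS)) hv
      have hSA : ∑ w ∈ A, f w = -((m : ℤ) + k) := by
        rw [Finset.sum_eq_single P]
        · simp [hfdef]
        · intro b hb hbP
          simp only [hfdef, if_neg hbP, if_neg (hPnS b hb)]
        · intro h; exact absurd hP h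
      have hSB : ∑ w ∈ Aᶜ, f w = -((n : ℤ) - j) := by
        have h1 : ∀ w ∈ Aᶜ, f w = if w ∈ S then (-1 : ℤ) else 0 := by
          intro w hw
          have : w ≠ P := fun h => (Finset.mem_compl.mp hw) (h ▸ hP)
          simp only [hfdef, if_neg this]
        rw [Finset.sum_congr rfl h1, Finset.sum_ite_mem,
          Finset.inter_eq_right.mpr hS, Finset.sum_const, hScard]
        have : ((n - j : ℕ) : ℤ) = (n : ℤ) - j := by
          rw [Nat.cast_sub hjn]
        simp [this]
      have hxZ : (x : ℤ) = (n : ℤ) * m - n + n * k + j := by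
        have : ((n * (m - 1) : ℕ) : ℤ) = (n : ℤ) * ((m : ℤ) - 1) := by
          rw [Nat.cast_mul, Nat.cast_sub hm]; push_cast; ring
        have hx2 : (x : ℤ) = ((n * (m - 1) : ℕ) : ℤ) + ((n * k + j : ℕ) : ℤ) := by
          rw [hr]
          exact_mod_cast congrArg (Nat.cast : ℕ → ℤ) hxr
        rw [hx2, this]
        push_cast
        ring
      refine ⟨f, ?_, ?_⟩
      · rw [lap_of_mem G A m n hG f P hP, hSB]
        simp only [hfdef, if_pos rfl]
        rw [hxZ]
        ring
      · intro Q hQ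
        by_cases hQA : Q ∈ A
        · rw [lap_of_mem G A m n hG f Q hQA, hSB]
          simp only [hfdef, if_neg hQ, if_neg (hPnS Q hQA)]
          have : (j : ℤ) ≤ n := by exact_mod_cast hjn
          linarith
        · rw [lap_of_not_mem G A m n hG f Q hQA, hSA]
          have hQP : Q ≠ P := fun h => hQA (h ▸ hP)
          simp only [hfdef, if_neg hQP]
          by_cases hQS : Q ∈ S
          · rw [if_pos hQS]
            have : (0 : ℤ) ≤ k := by positivity
            push_cast
            linarith [(by exact_mod_cast hm : (1 : ℤ) ≤ m)]
          · rw [if_neg hQS]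
            have : (0 : ℤ) ≤ k := by positivity
            have : (0 : ℤ) ≤ m := by positivity
            push_cast
            linarith [(by positivity : (0:ℤ) ≤ (k:ℤ)), (by positivity : (0:ℤ) ≤ (m:ℤ))]
end

section
/- Let n, m ≥ 1 and let K_{m,n} be the complete bipartite graph with parts of sizes m and n. For every vertex P of degree n (i.e., a vertex in the part of size m), the rank Weierstrass set of K_{m,n} at P is H_r(P) = nℕ ∪ ((m−1)n + ℕ) = { nk : k ∈ ℕ } ∪ { t ∈ ℕ : t ≥ (m−1)n }. -/
open scoped Classical

namespace BNAux

open Multigraph Finset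

variable {G : Multigraph}

lemma lap_apply (f : G.V → ℤ) (v : G.V) :
    G.lap f v = ∑ w, (G.adj v w : ℤ) * (f v - f w) := rfl

lemma lap_add (f g : G.V → ℤ) : G.lap (f + g) = G.lap f + G.lap g := by
  funext v
  simp only [Multigraph.lap, Pi.add_apply]
  rw [← Finset.sum_add_distrib]
  exact Finset.sum_congr rfl fun w _ => by ring

lemma lap_sub (f g : G.V → ℤ) : G.lap (f - g) = G.lap f - G.lap g := by
  funext v
  simp only [Multigraph.lap, Pi.sub_apply]
  rw [← Finset.sum_sub_distrib]
  exact Finset.sum_congr rfl fun w _ => by ring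

lemma deg_lap (f : G.V → ℤ) : G.deg (G.lap f) = 0 := by
  unfold Multigraph.deg Multigraph.lap
  have h1 : ∀ v : G.V, ∑ w, (G.adj v w : ℤ) * (f v - f w)
      = (∑ w, (G.adj v w : ℤ) * f v) - ∑ w, (G.adj v w : ℤ) * f w := by
    intro v; rw [← Finset.sum_sub_distrib]
    exact Finset.sum_congr rfl fun w _ => by ring
  rw [Finset.sum_congr rfl fun v _ => h1 v, Finset.sum_sub_distrib]
  have h2 : ∑ v : G.V, ∑ w, (G.adj v w : ℤ) * f w
      = ∑ v : G.V, ∑ w, (G.adj v w : ℤ) * f v := by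
    rw [Finset.sum_comm]
    exact Finset.sum_congr rfl fun v _ => Finset.sum_congr rfl fun w _ => by
      rw [G.adj_symm]
  rw [h2, sub_self]

lemma deg_sub (D E : G.V → ℤ) : G.deg (D - E) = G.deg D - G.deg E := by
  unfold Multigraph.deg
  rw [← Finset.sum_sub_distrib]; rfl

lemma sum_lap_mul (f h : G.V → ℤ) :
    ∑ v, G.lap f v * h v = ∑ v, f v * G.lap h v := by
  simp only [Multigraph.lap]
  have l1 : ∀ (a b : G.V → ℤ), ∑ v, (∑ w, (G.adj v w : ℤ) * (a v - a w)) * b v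
      = (∑ v, ∑ w, (G.adj v w : ℤ) * a v * b v) - ∑ v, ∑ w, (G.adj v w : ℤ) * a w * b v := by
    intro a b
    rw [← Finset.sum_sub_distrib]
    refine Finset.sum_congr rfl fun v _ => ?_
    rw [Finset.sum_mul, ← Finset.sum_sub_distrib]
    exact Finset.sum_congr rfl fun w _ => by ring
  have l2 : ∀ (a b : G.V → ℤ), ∑ v, b v * (∑ w, (G.adj v w : ℤ) * (a v - a w))
      = (∑ v, ∑ w, (G.adj v w : ℤ) * a v * b v) - ∑ v, ∑ w, (G.adj v w : ℤ) * a w * b v := by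
    intro a b
    rw [← Finset.sum_sub_distrib]
    refine Finset.sum_congr rfl fun v _ => ?_
    rw [Finset.mul_sum, ← Finset.sum_sub_distrib]
    exact Finset.sum_congr rfl fun w _ => by ring
  rw [l1 f h]
  have l3 : ∑ v, f v * (∑ w, (G.adj v w : ℤ) * (h v - h w))
      = (∑ v, ∑ w, (G.adj v w : ℤ) * h v * f v) - ∑ v, ∑ w, (G.adj v w : ℤ) * h w * f v :=
    l2 h f
  rw [l3]
  have swap1 : ∑ v, ∑ w, (G.adj v w : ℤ) * f w * h v
      = ∑ v, ∑ w, (G.adj v w : ℤ) * h w * f v := by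
    rw [Finset.sum_comm]
    exact Finset.sum_congr rfl fun v _ => Finset.sum_congr rfl fun w _ => by
      rw [G.adj_symm]; ring
  have swap2 : ∑ v, ∑ w, (G.adj v w : ℤ) * f v * h v
      = ∑ v, ∑ w, (G.adj v w : ℤ) * h v * f v := by
    exact Finset.sum_congr rfl fun v _ => Finset.sum_congr rfl fun w _ => by ring
  rw [swap1, swap2]

lemma linNonempty_mono {D D' : G.V → ℤ} (h : ∀ v, D v ≤ D' v) :
    G.LinNonempty D → G.LinNonempty D' := by
  rintro ⟨f, hf⟩
  refine ⟨f, fun v => ?_⟩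
  have h1 := hf v
  simp only [Pi.sub_apply] at h1 ⊢
  have := h v
  linarith

lemma linNonempty_shift (D f : G.V → ℤ) :
    G.LinNonempty (D - G.lap f) ↔ G.LinNonempty D := by
  constructor
  · rintro ⟨h, hh⟩
    refine ⟨f + h, ?_⟩
    have : D - G.lap (f + h) = D - G.lap f - G.lap h := by
      rw [lap_add]; abel
    rw [this]; exact hh
  · rintro ⟨h, hh⟩
    refine ⟨h - f, ?_⟩
    have : D - G.lap f - G.lap (h - f) = D - G.lap h := by
      rw [lap_sub]; abel
    rw [this]; exact hh

lemma deg_nonneg_of_lin {D : G.V → ℤ} (h : G.LinNonempty D) : 0 ≤ G.deg D := by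
  obtain ⟨f, hf⟩ := h
  have h1 : 0 ≤ G.deg (D - G.lap f) := Finset.sum_nonneg fun v _ => hf v
  rwa [deg_sub, deg_lap, sub_zero] at h1








/-- single-vertex effective divisor of given degree -/
lemma deg_pt (P : G.V) (c : ℤ) : G.deg (G.pt P c) = c := by
  unfold Multigraph.deg Multigraph.pt
  simp

lemma eff_pt (P : G.V) (c : ℤ) (hc : 0 ≤ c) : G.Effective (G.pt P c) := by
  intro v; unfold Multigraph.pt; split <;> simp [hc]

/-- downward closure of the rank set -/
lemma ok_mono (D : G.V → ℤ) {j k : ℕ} (hjk : j ≤ k)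
    (hk : ∀ E : G.V → ℤ, G.Effective E → G.deg E = (k : ℤ) → G.LinNonempty (D - E)) :
    ∀ E : G.V → ℤ, G.Effective E → G.deg E = (j : ℤ) → G.LinNonempty (D - E) := by
  intro E hE hdeg
  obtain ⟨v₀⟩ := G.nonemptyV
  set E' : G.V → ℤ := E + G.pt v₀ ((k : ℤ) - j) with hE'
  have hEeff : G.Effective E' := fun v => by
    have := hE v
    have h2 := eff_pt (G := G) v₀ ((k : ℤ) - j) (by have : (j:ℤ) ≤ k := (by exact_mod_cast hjk); linarith) v
    simp only [hE', Pi.add_apply]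
    linarith
  have hdeg' : G.deg E' = (k : ℤ) := by
    have : G.deg E' = G.deg E + G.deg (G.pt v₀ ((k : ℤ) - j)) := by
      unfold Multigraph.deg
      simp only [hE', Pi.add_apply]
      rw [Finset.sum_add_distrib]
    rw [this, hdeg, deg_pt]; ring
  have hlin := hk E' hEeff hdeg'
  refine linNonempty_mono (fun v => ?_) hlin
  have := eff_pt (G := G) v₀ ((k : ℤ) - j) (by have : (j:ℤ) ≤ k := (by exact_mod_cast hjk); linarith) v
  simp only [hE', Pi.sub_apply, Pi.add_apply]
  linarith

lemma bddAbove_rank_set (D : G.V → ℤ) :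
    BddAbove {k : ℕ | ∀ E : G.V → ℤ, G.Effective E → G.deg E = (k : ℤ) →
        G.LinNonempty (D - E)} := by
  obtain ⟨v₀⟩ := G.nonemptyV
  refine ⟨(G.deg D).toNat, fun j hj => ?_⟩
  have hlin := hj (G.pt v₀ (j : ℤ)) (eff_pt v₀ _ (by positivity)) (deg_pt v₀ _)
  have h0 := deg_nonneg_of_lin hlin
  rw [deg_sub, deg_pt] at h0
  omega

lemma le_rank_of (D : G.V → ℤ) (k : ℕ) (h0 : G.LinNonempty D)
    (h : ∀ E : G.V → ℤ, G.Effective E → G.deg E = (k : ℤ) → G.LinNonempty (D - E)) :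
    (k : ℤ) ≤ G.rank D := by
  unfold Multigraph.rank
  rw [if_pos h0]
  exact_mod_cast le_csSup (bddAbove_rank_set D) h

lemma rank_le_of_not (D : G.V → ℤ) (k : ℕ)
    (h : ¬ (∀ E : G.V → ℤ, G.Effective E → G.deg E = ((k+1 : ℕ) : ℤ) → G.LinNonempty (D - E))) :
    G.rank D ≤ (k : ℤ) := by
  unfold Multigraph.rank
  split
  · have hle : ∀ j ∈ {k' : ℕ | ∀ E : G.V → ℤ, G.Effective E → G.deg E = (k' : ℤ) →
        G.LinNonempty (D - E)}, j ≤ k := by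
      intro j hj
      by_contra hc
      exact h (ok_mono D (by omega) hj)
    rcases Set.eq_empty_or_nonempty {k' : ℕ | ∀ E : G.V → ℤ, G.Effective E → G.deg E = (k' : ℤ) →
        G.LinNonempty (D - E)} with he | hne
    · rw [he, csSup_empty]
      exact_mod_cast Nat.zero_le k
    · exact_mod_cast csSup_le hne hle
  · omega

lemma rank_neg_one (D : G.V → ℤ) (h : G.deg D < 0) : G.rank D = -1 := by
  unfold Multigraph.rank
  rw [if_neg]
  intro hlin
  exact absurd (deg_nonneg_of_lin hlin) (by omega)

lemma rank_nonneg (D : G.V → ℤ) (h : G.LinNonempty D) : 0 ≤ G.rank D := by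
  unfold Multigraph.rank
  rw [if_pos h]
  positivity


lemma reduced_not_lin (P : G.V) (D : G.V → ℤ)
    (hred : ∀ S : Finset G.V, S.Nonempty → P ∉ S →
      ∃ u ∈ S, D u < ∑ w ∈ Sᶜ, (G.adj u w : ℤ))
    (hDP : D P < 0) : ¬ G.LinNonempty D := by
  rintro ⟨f, hf⟩
  obtain ⟨b, -, hb⟩ := Finset.exists_max_image Finset.univ f ⟨P, Finset.mem_univ P⟩
  set M := f b with hM
  set S : Finset G.V := Finset.univ.filter (fun v => f v = M) with hS
  by_cases hPS : P ∈ S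
  · have hfP : f P = M := (Finset.mem_filter.mp hPS).2
    have h1 : 0 ≤ G.lap f P := by
      rw [lap_apply]
      refine Finset.sum_nonneg fun w _ => ?_
      have h3 : f w ≤ M := hb w (Finset.mem_univ w)
      have h4 : 0 ≤ f P - f w := by rw [hfP]; linarith
      exact mul_nonneg (by positivity) h4
    have h2 := hf P
    simp only [Pi.sub_apply] at h2
    linarith
  · have hSne : S.Nonempty := ⟨b, Finset.mem_filter.mpr ⟨Finset.mem_univ b, rfl⟩⟩
    obtain ⟨u, huS, hu⟩ := hred S hSne hPS
    have hfu : f u = M := (Finset.mem_filter.mp huS).2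
    have hlapu : (∑ w ∈ Sᶜ, (G.adj u w : ℤ)) ≤ G.lap f u := by
      rw [lap_apply]
      have key : ∀ w : G.V, (if w ∈ Sᶜ then (G.adj u w : ℤ) else 0)
          ≤ (G.adj u w : ℤ) * (f u - f w) := by
        intro w
        by_cases hw : w ∈ Sᶜ
        · rw [if_pos hw]
          have hwS : f w ≠ M := fun h =>
            (Finset.mem_compl.mp hw) (Finset.mem_filter.mpr ⟨Finset.mem_univ w, h⟩)
          have h3 : f w ≤ M := hb w (Finset.mem_univ w)
          have h4 : 1 ≤ f u - f w := by
            rw [hfu]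
            rcases lt_or_eq_of_le h3 with h | h
            · omega
            · exact absurd h hwS
          exact le_mul_of_one_le_right (by positivity) h4
        · rw [if_neg hw]
          have h5 : f w = M := by
            have hwS : w ∈ S := by simpa using hw
            exact (Finset.mem_filter.mp hwS).2
          rw [hfu, h5, sub_self, mul_zero]
      calc ∑ w ∈ Sᶜ, (G.adj u w : ℤ)
          = ∑ w : G.V, (if w ∈ Sᶜ then (G.adj u w : ℤ) else 0) := by
            rw [Finset.sum_ite_mem, Finset.univ_inter]
        _ ≤ ∑ w, (G.adj u w : ℤ) * (f u - f w) := Finset.sum_le_sum fun w _ => key w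
    have h2 := hf u
    simp only [Pi.sub_apply] at h2
    linarith
lemma lap_indicator_mem (S : Finset G.V) {v : G.V} (hv : v ∈ S) :
    G.lap (fun w => if w ∈ S then (1 : ℤ) else 0) v = ∑ w ∈ Sᶜ, (G.adj v w : ℤ) := by
  rw [lap_apply]
  have key : ∀ w : G.V, (G.adj v w : ℤ) *
      ((if v ∈ S then (1:ℤ) else 0) - (if w ∈ S then (1:ℤ) else 0))
      = (if w ∈ Sᶜ then (G.adj v w : ℤ) else 0) := by
    intro w
    rw [if_pos hv]
    by_cases hw : w ∈ S
    · rw [if_pos hw, if_neg (by simpa using hw)]; ring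
    · rw [if_neg hw, if_pos (Finset.mem_compl.mpr hw)]; ring
  rw [Finset.sum_congr rfl fun w _ => key w, Finset.sum_ite_mem, Finset.univ_inter]

lemma lap_indicator_notMem (S : Finset G.V) {v : G.V} (hv : v ∉ S) :
    G.lap (fun w => if w ∈ S then (1 : ℤ) else 0) v ≤ 0 := by
  rw [lap_apply]
  refine Finset.sum_nonpos fun w _ => ?_
  rw [if_neg hv]
  by_cases hw : w ∈ S
  · rw [if_pos hw]
    have : (0:ℤ) ≤ (G.adj v w : ℤ) := by positivity
    nlinarith
  · rw [if_neg hw]; ring_nf; simp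

lemma exists_reduced (P : G.V) (w₀ : G.V → ℤ) (hw₀ : ∀ v, 0 ≤ w₀ v) (hwP : w₀ P = 0)
    (hlapw : ∀ v, v ≠ P → 1 ≤ G.lap w₀ v) (D : G.V → ℤ) (hD : ∀ v, v ≠ P → 0 ≤ D v) :
    ∃ f, (∀ v, v ≠ P → 0 ≤ (D - G.lap f) v) ∧
      ∀ S : Finset G.V, S.Nonempty → P ∉ S →
        ∃ u ∈ S, (D - G.lap f) u < ∑ w ∈ Sᶜ, (G.adj u w : ℤ) := by
  suffices H : ∀ N : ℕ, ∀ D : G.V → ℤ, (∀ v, v ≠ P → 0 ≤ D v) →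
      (∑ v, D v * w₀ v) < (N : ℤ) →
      ∃ f, (∀ v, v ≠ P → 0 ≤ (D - G.lap f) v) ∧
        ∀ S : Finset G.V, S.Nonempty → P ∉ S →
          ∃ u ∈ S, (D - G.lap f) u < ∑ w ∈ Sᶜ, (G.adj u w : ℤ) by
    refine H ((∑ v, D v * w₀ v).toNat + 1) D hD ?_
    push_cast
    rcases le_or_gt 0 (∑ v, D v * w₀ v) with h | h
    · rw [Int.toNat_of_nonneg h]; linarith
    · have : (0:ℤ) ≤ ((∑ v, D v * w₀ v).toNat : ℤ) := by positivity
      linarith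
  intro N
  induction N with
  | zero =>
    intro D hD hW
    exfalso
    have h0 : 0 ≤ ∑ v, D v * w₀ v := Finset.sum_nonneg fun v _ => by
      by_cases hv : v = P
      · rw [hv, hwP, mul_zero]
      · exact mul_nonneg (hD v hv) (hw₀ v)
    simp only [Nat.cast_zero] at hW
    linarith
  | succ N ih =>
    intro D hD hW
    by_cases hred : ∀ S : Finset G.V, S.Nonempty → P ∉ S →
        ∃ u ∈ S, D u < ∑ w ∈ Sᶜ, (G.adj u w : ℤ)
    · refine ⟨0, fun v hv => ?_, fun S h1 h2 => ?_⟩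
      · have : G.lap (0 : G.V → ℤ) = 0 := by
          funext v; rw [lap_apply]; simp
        rw [this]; simpa using hD v hv
      · have : G.lap (0 : G.V → ℤ) = 0 := by
          funext v; rw [lap_apply]; simp
        rw [this]
        simpa using hred S h1 h2
    · push_neg at hred
      obtain ⟨S, hSne, hPS, hfire⟩ := hred
      set g : G.V → ℤ := fun v => if v ∈ S then 1 else 0 with hg
      have hD' : ∀ v, v ≠ P → 0 ≤ (D - G.lap g) v := by
        intro v hv
        simp only [Pi.sub_apply]
        by_cases hvS : v ∈ S
        · rw [lap_indicator_mem S hvS]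
          linarith [hfire v hvS]
        · have := lap_indicator_notMem S hvS
          have := hD v hv
          linarith
      have hpair : ∑ v, G.lap g v * w₀ v = ∑ v ∈ S, G.lap w₀ v := by
        rw [sum_lap_mul]
        have : ∀ v : G.V, g v * G.lap w₀ v = if v ∈ S then G.lap w₀ v else 0 := by
          intro v; rw [hg]; by_cases hv : v ∈ S <;> simp [hv]
        rw [Finset.sum_congr rfl fun v _ => this v, Finset.sum_ite_mem, Finset.univ_inter]
      have hdec : 1 ≤ ∑ v ∈ S, G.lap w₀ v := by
        obtain ⟨u₀, hu₀⟩ := hSne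
        calc (1:ℤ) ≤ G.lap w₀ u₀ := hlapw u₀ (fun h => hPS (h ▸ hu₀))
          _ ≤ ∑ v ∈ S, G.lap w₀ v := Finset.single_le_sum
              (fun v hv => le_trans zero_le_one (hlapw v (fun h => hPS (h ▸ hv)))) hu₀
      have hW' : (∑ v, (D - G.lap g) v * w₀ v) < (N : ℤ) := by
        have hsplit : ∑ v, (D - G.lap g) v * w₀ v
            = (∑ v, D v * w₀ v) - ∑ v, G.lap g v * w₀ v := by
          rw [← Finset.sum_sub_distrib]
          exact Finset.sum_congr rfl fun v _ => by simp [Pi.sub_apply]; ring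
        rw [hsplit, hpair]
        push_cast at hW ⊢
        linarith
      obtain ⟨f, h1, h2⟩ := ih (D - G.lap g) hD' hW'
      have heq : D - G.lap (g + f) = D - G.lap g - G.lap f := by
        rw [lap_add]; abel
      exact ⟨g + f, by rw [heq]; exact h1, by rw [heq]; exact h2⟩
lemma reduced_bound (P : G.V) (D : G.V → ℤ)
    (hred : ∀ S : Finset G.V, S.Nonempty → P ∉ S →
      ∃ u ∈ S, D u < ∑ w ∈ Sᶜ, (G.adj u w : ℤ)) :
    ∀ B : Finset G.V, P ∉ B →
      2 * ∑ v ∈ B, D v + 2 * (B.card : ℤ) ≤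
        2 * (∑ x ∈ B, ∑ y ∈ Bᶜ, (G.adj x y : ℤ)) + ∑ x ∈ B, ∑ y ∈ B, (G.adj x y : ℤ) := by
  intro B
  induction B using Finset.strongInduction with
  | _ B ih =>
    intro hPB
    rcases B.eq_empty_or_nonempty with rfl | hBne
    · simp
    obtain ⟨u, huB, hu⟩ := hred B hBne hPB
    have hPB' : P ∉ B.erase u := fun h => hPB (Finset.mem_of_mem_erase h)
    have IH := ih (B.erase u) (Finset.erase_ssubset huB) hPB'
    set B' := B.erase u with hB'
    -- identity: compl of erase
    have hcompl : B'ᶜ = insert u Bᶜ := Finset.compl_erase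
    have huBc : u ∉ Bᶜ := by simpa using huB
    -- S1
    have hS1 : ∑ v ∈ B, D v = D u + ∑ v ∈ B', D v := (Finset.add_sum_erase B D huB).symm
    have hS2 : (B.card : ℤ) = (B'.card : ℤ) + 1 := by
      rw [hB', Finset.card_erase_of_mem huB]
      have : 1 ≤ B.card := Finset.card_pos.mpr hBne
      push_cast
      omega
    -- out sums
    have hout : ∑ x ∈ B, ∑ y ∈ Bᶜ, (G.adj x y : ℤ)
        = (∑ y ∈ Bᶜ, (G.adj u y : ℤ)) + ∑ x ∈ B', ∑ y ∈ Bᶜ, (G.adj x y : ℤ) :=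
      (Finset.add_sum_erase B _ huB).symm
    have hout' : ∑ x ∈ B', ∑ y ∈ B'ᶜ, (G.adj x y : ℤ)
        = (∑ x ∈ B', ∑ y ∈ Bᶜ, (G.adj x y : ℤ)) + ∑ x ∈ B', (G.adj x u : ℤ) := by
      rw [hcompl]
      rw [← Finset.sum_add_distrib]
      refine Finset.sum_congr rfl fun x _ => ?_
      rw [Finset.sum_insert huBc]
      ring
    -- in sums
    have hin : ∑ x ∈ B, ∑ y ∈ B, (G.adj x y : ℤ)
        = (∑ y ∈ B', (G.adj u y : ℤ)) + (∑ x ∈ B', (G.adj x u : ℤ))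
          + ∑ x ∈ B', ∑ y ∈ B', (G.adj x y : ℤ) := by
      rw [← Finset.add_sum_erase B _ huB, ← hB']
      have h1 : ∑ y ∈ B, (G.adj u y : ℤ) = ∑ y ∈ B', (G.adj u y : ℤ) := by
        rw [← Finset.add_sum_erase B _ huB, ← hB']
        simp [G.adj_loopless]
      have h2 : ∀ x ∈ B', ∑ y ∈ B, (G.adj x y : ℤ)
          = (G.adj x u : ℤ) + ∑ y ∈ B', (G.adj x y : ℤ) := by
        intro x hx
        rw [← Finset.add_sum_erase B _ huB, ← hB']
      rw [h1, Finset.sum_congr rfl h2, Finset.sum_add_distrib]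
      ring
    have hsym : ∑ x ∈ B', (G.adj x u : ℤ) = ∑ y ∈ B', (G.adj u y : ℤ) :=
      Finset.sum_congr rfl fun x _ => by rw [G.adj_symm]
    have hu' : D u ≤ (∑ w ∈ Bᶜ, (G.adj u w : ℤ)) - 1 := by linarith
    rw [hS1, hS2, hout, hin]
    rw [hout'] at IH
    linarith
section Specific

variable {m n : ℕ} {A : Finset G.V} {P : G.V}

lemma sum_adj_mul (hG : G.IsCompleteBipartite A m n) (v : G.V) (h : G.V → ℤ) :
    ∑ w, (G.adj v w : ℤ) * h w
      = if v ∈ A then ∑ w ∈ Aᶜ, h w else ∑ w ∈ A, h w := by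
  by_cases hv : v ∈ A
  · rw [if_pos hv]
    have key : ∀ w : G.V, (G.adj v w : ℤ) * h w = if w ∈ Aᶜ then h w else 0 := by
      intro w
      rw [hG.2.2]
      by_cases hw : w ∈ A
      · rw [if_neg (by tauto), if_neg (by simpa using hw)]; push_cast; ring
      · rw [if_pos (by tauto), if_pos (Finset.mem_compl.mpr hw)]; push_cast; ring
    rw [Finset.sum_congr rfl fun w _ => key w, Finset.sum_ite_mem, Finset.univ_inter]
  · rw [if_neg hv]
    have key : ∀ w : G.V, (G.adj v w : ℤ) * h w = if w ∈ A then h w else 0 := by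
      intro w
      rw [hG.2.2]
      by_cases hw : w ∈ A
      · rw [if_pos (by tauto), if_pos hw]; push_cast; ring
      · rw [if_neg (by tauto), if_neg hw]; push_cast; ring
    rw [Finset.sum_congr rfl fun w _ => key w, Finset.sum_ite_mem, Finset.univ_inter]

lemma lap_eq (hG : G.IsCompleteBipartite A m n) (f : G.V → ℤ) (v : G.V) :
    G.lap f v = if v ∈ A then (n : ℤ) * f v - ∑ w ∈ Aᶜ, f w
      else (m : ℤ) * f v - ∑ w ∈ A, f w := by
  rw [lap_apply]
  have h1 : ∑ w, (G.adj v w : ℤ) * (f v - f w)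
      = (∑ w, (G.adj v w : ℤ) * f v) - ∑ w, (G.adj v w : ℤ) * f w := by
    rw [← Finset.sum_sub_distrib]
    exact Finset.sum_congr rfl fun w _ => by ring
  rw [h1, sum_adj_mul hG v f, sum_adj_mul hG v (fun _ => f v)]
  by_cases hv : v ∈ A
  · rw [if_pos hv, if_pos hv, if_pos hv, Finset.sum_const, hG.2.1]
    push_cast; ring
  · rw [if_neg hv, if_neg hv, if_neg hv, Finset.sum_const, hG.1]
    push_cast; ring

lemma sum_over_A (hG : G.IsCompleteBipartite A m n) (hm : 1 ≤ m) (hP : P ∈ A)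
    (h : G.V → ℤ) (X Y : ℤ) (h1 : h P = X) (h2 : ∀ w ∈ A, w ≠ P → h w = Y) :
    ∑ w ∈ A, h w = X + ((m : ℤ) - 1) * Y := by
  rw [← Finset.add_sum_erase A h hP, h1]
  have h3 : ∑ w ∈ A.erase P, h w = ∑ w ∈ A.erase P, Y :=
    Finset.sum_congr rfl fun w hw =>
      h2 w (Finset.mem_of_mem_erase hw) (Finset.ne_of_mem_erase hw)
  rw [h3, Finset.sum_const, Finset.card_erase_of_mem hP, hG.1]
  have : ((m - 1 : ℕ) : ℤ) = (m : ℤ) - 1 := by push_cast; omega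
  rw [nsmul_eq_mul, this]

lemma sum_over_Ac (hG : G.IsCompleteBipartite A m n)
    (h : G.V → ℤ) (Z : ℤ) (hz : ∀ w ∈ Aᶜ, h w = Z) :
    ∑ w ∈ Aᶜ, h w = (n : ℤ) * Z := by
  rw [Finset.sum_congr rfl hz, Finset.sum_const, hG.2.1, nsmul_eq_mul]

end Specific
section LB

variable {m n : ℕ} {A : Finset G.V} {P : G.V}

lemma pt_apply (P : G.V) (c : ℤ) (v : G.V) :
    G.pt P c v = if v = P then c else 0 := rfl

lemma okA (hG : G.IsCompleteBipartite A m n) (hm : 1 ≤ m) (hn : 1 ≤ n) (hP : P ∈ A)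
    (d k : ℕ) (hk : n * k ≤ d) :
    ∀ E : G.V → ℤ, G.Effective E → G.deg E = (k : ℤ) →
      G.LinNonempty (G.pt P (d : ℤ) - E) := by
  intro E hE hdeg
  set f : G.V → ℤ := fun v => if v = P then (k : ℤ) - E P else if v ∈ A then -E v else 0
    with hf
  set tA : ℤ := ∑ w ∈ A.erase P, E w with htA
  set sB : ℤ := ∑ w ∈ Aᶜ, E w with hsB
  have htot : E P + tA + sB = (k : ℤ) := by
    have h1 : ∑ w ∈ A, E w + ∑ w ∈ Aᶜ, E w = ∑ w, E w := Finset.sum_add_sum_compl A E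
    have h2 : ∑ w ∈ A, E w = E P + tA := (Finset.add_sum_erase A E hP).symm
    have h3 : ∑ w, E w = (k : ℤ) := hdeg
    rw [h2] at h1
    linarith
  have htA0 : 0 ≤ tA := Finset.sum_nonneg fun w _ => hE w
  have hsB0 : 0 ≤ sB := Finset.sum_nonneg fun w _ => hE w
  have hsAc : ∑ w ∈ Aᶜ, f w = 0 := by
    rw [sum_over_Ac hG f 0 (fun w hw => by
      have h1 : w ∉ A := Finset.mem_compl.mp hw
      have h2 : w ≠ P := fun h => h1 (h ▸ hP)
      simp only [hf]; rw [if_neg h2, if_neg h1])]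
    ring
  have hsA : ∑ w ∈ A, f w = (k : ℤ) - E P - tA := by
    rw [← Finset.add_sum_erase A f hP]
    have h1 : f P = (k : ℤ) - E P := by simp [hf]
    have h2 : ∑ w ∈ A.erase P, f w = -tA := by
      rw [htA, ← Finset.sum_neg_distrib]
      refine Finset.sum_congr rfl fun w hw => ?_
      simp only [hf]; rw [if_neg (Finset.ne_of_mem_erase hw), if_pos (Finset.mem_of_mem_erase hw)]
    rw [h1, h2]; ring
  refine ⟨f, fun v => ?_⟩
  simp only [Pi.sub_apply, pt_apply, lap_eq hG f v]
  by_cases hv : v = P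
  · rw [hv, if_pos rfl, if_pos hP, hsAc]
    have hfP : f P = (k : ℤ) - E P := by simp [hf]
    rw [hfP]
    have hEP : 0 ≤ E P := hE P
    have h1 : (n : ℤ) * k ≤ (d : ℤ) := by exact_mod_cast hk
    have h2 : (1 : ℤ) ≤ n := by exact_mod_cast hn
    nlinarith
  · rw [if_neg hv]
    by_cases hvA : v ∈ A
    · rw [if_pos hvA, hsAc]
      have h1 : f v = -E v := by simp only [hf]; rw [if_neg hv, if_pos hvA]
      rw [h1]
      have hEv : 0 ≤ E v := hE v
      have h2 : (1 : ℤ) ≤ n := by exact_mod_cast hn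
      nlinarith
    · rw [if_neg hvA, hsA]
      have h1 : f v = 0 := by simp only [hf]; rw [if_neg hv, if_neg hvA]
      rw [h1]
      have h3 : E v ≤ sB := Finset.single_le_sum (fun w _ => hE w)
        (Finset.mem_compl.mpr hvA)
      linarith

lemma okB (hG : G.IsCompleteBipartite A m n) (hm : 1 ≤ m) (hn : 1 ≤ n) (hP : P ∈ A)
    (d k : ℕ) (hk : (k : ℤ) + ((m : ℤ) - 1) * ((n : ℤ) - 1) ≤ (d : ℤ)) :
    ∀ E : G.V → ℤ, G.Effective E → G.deg E = (k : ℤ) →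
      G.LinNonempty (G.pt P (d : ℤ) - E) := by
  intro E hE hdeg
  have hEk : ∀ v, E v ≤ (k : ℤ) := by
    intro v
    rw [← hdeg]
    exact Finset.single_le_sum (fun w _ => hE w) (Finset.mem_univ v)
  set D : G.V → ℤ := G.pt P (d : ℤ) - E with hD
  set f₀ : G.V → ℤ := fun v => if v = P then ((m : ℤ) + 1) * k else if v ∈ A then 0 else (k : ℤ)
    with hf₀
  have hsAc₀ : ∑ w ∈ Aᶜ, f₀ w = (n : ℤ) * k :=
    sum_over_Ac hG f₀ (k : ℤ) (fun w hw => by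
      have h1 : w ∉ A := Finset.mem_compl.mp hw
      have h2 : w ≠ P := fun h => h1 (h ▸ hP)
      simp only [hf₀]; rw [if_neg h2, if_neg h1])
  have hsA₀ : ∑ w ∈ A, f₀ w = ((m : ℤ) + 1) * k := by
    rw [sum_over_A hG hm hP f₀ (((m : ℤ) + 1) * k) 0 (by simp [hf₀])
      (fun w hw hwP => by simp only [hf₀]; rw [if_neg hwP, if_pos hw])]
    ring
  have hD₀ : ∀ v, v ≠ P → 0 ≤ (D - G.lap f₀) v := by
    intro v hv
    simp only [Pi.sub_apply, hD, pt_apply, lap_eq hG f₀ v]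
    rw [if_neg hv]
    by_cases hvA : v ∈ A
    · rw [if_pos hvA, hsAc₀]
      have h1 : f₀ v = 0 := by simp only [hf₀]; rw [if_neg hv, if_pos hvA]
      rw [h1]
      have h2 := hEk v
      have h3 : (1 : ℤ) ≤ n := by exact_mod_cast hn
      have h4 : (0 : ℤ) ≤ k := by positivity
      nlinarith
    · rw [if_neg hvA, hsA₀]
      have h1 : f₀ v = (k : ℤ) := by simp only [hf₀]; rw [if_neg hv, if_neg hvA]
      rw [h1]
      have h2 := hEk v
      nlinarith
  set w₀ : G.V → ℤ := fun v => if v = P then 0 else if v ∈ A then (m : ℤ) + 1 else (m : ℤ)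
    with hw₀def
  have hm1 : (1 : ℤ) ≤ m := by exact_mod_cast hm
  have hn1 : (1 : ℤ) ≤ n := by exact_mod_cast hn
  have hw₀ : ∀ v, 0 ≤ w₀ v := by
    intro v; simp only [hw₀def]
    split
    · omega
    · split <;> linarith
  have hwP : w₀ P = 0 := by simp [hw₀def]
  have hsAcw : ∑ w ∈ Aᶜ, w₀ w = (n : ℤ) * m :=
    sum_over_Ac hG w₀ (m : ℤ) (fun w hw => by
      have h1 : w ∉ A := Finset.mem_compl.mp hw
      have h2 : w ≠ P := fun h => h1 (h ▸ hP)
      simp only [hw₀def]; rw [if_neg h2, if_neg h1])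
  have hsAw : ∑ w ∈ A, w₀ w = ((m : ℤ) - 1) * ((m : ℤ) + 1) := by
    rw [sum_over_A hG hm hP w₀ 0 ((m : ℤ) + 1) (by simp [hw₀def])
      (fun w hw hwP' => by simp only [hw₀def]; rw [if_neg hwP', if_pos hw])]
    ring
  have hlapw : ∀ v, v ≠ P → 1 ≤ G.lap w₀ v := by
    intro v hv
    rw [lap_eq hG w₀ v]
    by_cases hvA : v ∈ A
    · rw [if_pos hvA, hsAcw]
      have h1 : w₀ v = (m : ℤ) + 1 := by simp only [hw₀def]; rw [if_neg hv, if_pos hvA]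
      rw [h1]
      nlinarith
    · rw [if_neg hvA, hsAw]
      have h1 : w₀ v = (m : ℤ) := by simp only [hw₀def]; rw [if_neg hv, if_neg hvA]
      rw [h1]
      nlinarith
  obtain ⟨f₁, hred1, hred2⟩ := exists_reduced P w₀ hw₀ hwP hlapw (D - G.lap f₀) hD₀
  set D₁ : G.V → ℤ := D - G.lap f₀ - G.lap f₁ with hD₁
  -- the mass bound
  have hbound := reduced_bound P D₁ hred2 (Finset.univ.erase P)
    (fun h => (Finset.ne_of_mem_erase h) rfl)
  -- compute sums in hbound
  have hadjP : ∀ x : G.V, (G.adj x P : ℤ) = if x ∈ A then 0 else 1 := by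
    intro x
    rw [hG.2.2]
    by_cases hx : x ∈ A
    · rw [if_pos hx, if_neg (by tauto)]; rfl
    · rw [if_neg hx, if_pos (by tauto)]; rfl
  have hrowsum : ∀ x : G.V, ∑ y, (G.adj x y : ℤ) = if x ∈ A then (n : ℤ) else (m : ℤ) := by
    intro x
    have := sum_adj_mul hG x (fun _ => 1)
    simp only [mul_one] at this
    rw [this]
    by_cases hx : x ∈ A
    · rw [if_pos hx, if_pos hx, Finset.sum_const, hG.2.1, nsmul_eq_mul, mul_one]
    · rw [if_neg hx, if_neg hx, Finset.sum_const, hG.1, nsmul_eq_mul, mul_one]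
  have hcompl : (Finset.univ.erase P)ᶜ = {P} := by
    rw [Finset.compl_erase]
    simp
  have hout : ∑ x ∈ Finset.univ.erase P, ∑ y ∈ (Finset.univ.erase P)ᶜ, (G.adj x y : ℤ)
      = (n : ℤ) := by
    rw [hcompl]
    have h1 : ∀ x : G.V, ∑ y ∈ ({P} : Finset G.V), (G.adj x y : ℤ) = (G.adj x P : ℤ) :=
      fun x => Finset.sum_singleton _ _
    rw [Finset.sum_congr rfl fun x _ => h1 x]
    have h2 : ∑ x : G.V, (G.adj x P : ℤ) = (n : ℤ) := by
      rw [Finset.sum_congr rfl fun x _ => hadjP x]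
      rw [← Finset.sum_add_sum_compl A]
      rw [Finset.sum_congr rfl (fun x hx => if_pos hx),
        Finset.sum_congr rfl (fun x (hx : x ∈ Aᶜ) => if_neg (Finset.mem_compl.mp hx)),
        Finset.sum_const, Finset.sum_const, hG.2.1]
      simp
    have h3 : ∑ x ∈ Finset.univ.erase P, (G.adj x P : ℤ)
        = (∑ x : G.V, (G.adj x P : ℤ)) - (G.adj P P : ℤ) := by
      rw [← Finset.add_sum_erase Finset.univ (fun x => (G.adj x P : ℤ)) (Finset.mem_univ P)]
      ring
    rw [h3, h2, G.adj_loopless]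
    simp
  have hin : ∑ x ∈ Finset.univ.erase P, ∑ y ∈ Finset.univ.erase P, (G.adj x y : ℤ)
      = 2 * (m : ℤ) * n - 2 * n := by
    have hrow' : ∀ x : G.V, ∑ y ∈ Finset.univ.erase P, (G.adj x y : ℤ)
        = (if x ∈ A then (n : ℤ) else (m : ℤ)) - (if x ∈ A then 0 else 1) := by
      intro x
      have h3 : ∑ y ∈ Finset.univ.erase P, (G.adj x y : ℤ)
          = (∑ y : G.V, (G.adj x y : ℤ)) - (G.adj x P : ℤ) := by
        rw [← Finset.add_sum_erase Finset.univ (fun y => (G.adj x y : ℤ)) (Finset.mem_univ P)]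
        ring
      rw [h3, hrowsum, hadjP]
    rw [Finset.sum_congr rfl fun x _ => hrow' x]
    have h4 : ∑ x ∈ Finset.univ.erase P,
        ((if x ∈ A then (n : ℤ) else (m : ℤ)) - (if x ∈ A then 0 else 1))
        = (∑ x : G.V, ((if x ∈ A then (n : ℤ) else (m : ℤ)) - (if x ∈ A then 0 else 1)))
          - ((n : ℤ) - 0) := by
      rw [← Finset.add_sum_erase Finset.univ _ (Finset.mem_univ P), if_pos hP, if_pos hP]
      ring
    rw [h4]
    have h5 : ∑ x : G.V, ((if x ∈ A then (n : ℤ) else (m : ℤ)) - (if x ∈ A then 0 else 1))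
        = (m : ℤ) * n + (n : ℤ) * ((m : ℤ) - 1) := by
      rw [← Finset.sum_add_sum_compl A]
      rw [Finset.sum_congr rfl (fun x hx => by rw [if_pos hx, if_pos hx]),
        Finset.sum_congr rfl (fun x (hx : x ∈ Aᶜ) => by
          rw [if_neg (Finset.mem_compl.mp hx), if_neg (Finset.mem_compl.mp hx)]),
        Finset.sum_const, Finset.sum_const, hG.1, hG.2.1]
      push_cast
      ring
    rw [h5]
    ring
  have hcard : ((Finset.univ.erase P).card : ℤ) = (m : ℤ) + n - 1 := by
    rw [Finset.card_erase_of_mem (Finset.mem_univ P)]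
    have h1 : A.card + Aᶜ.card = Fintype.card G.V := by
      rw [Finset.card_add_card_compl]
    rw [hG.1, hG.2.1] at h1
    have h2 : 1 ≤ Fintype.card G.V := Fintype.card_pos
    push_cast [Finset.card_univ]
    omega
  rw [hout, hin, hcard] at hbound
  have hmass : ∑ v ∈ Finset.univ.erase P, D₁ v ≤ ((m : ℤ) - 1) * ((n : ℤ) - 1) := by
    nlinarith
  have hdegD₁ : G.deg D₁ = (d : ℤ) - k := by
    rw [hD₁, hD, deg_sub, deg_sub, deg_sub, deg_lap, deg_lap, deg_pt, hdeg]
    ring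
  have hD₁P : 0 ≤ D₁ P := by
    have h1 : D₁ P + ∑ v ∈ Finset.univ.erase P, D₁ v = G.deg D₁ :=
      Finset.add_sum_erase Finset.univ D₁ (Finset.mem_univ P)
    rw [hdegD₁] at h1
    linarith
  refine ⟨f₀ + f₁, ?_⟩
  have heq : G.pt P (d : ℤ) - E - G.lap (f₀ + f₁) = D₁ := by
    rw [lap_add, hD₁, hD]; abel
  rw [heq]
  intro v
  by_cases hv : v = P
  · rw [hv]; exact hD₁P
  · exact hred1 v hv

end LB
section UB

variable {m n : ℕ} {A : Finset G.V} {P : G.V}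

lemma notok (hG : G.IsCompleteBipartite A m n) (hm : 1 ≤ m) (hn : 1 ≤ n) (hP : P ∈ A)
    (d K : ℕ) (hK1 : d / n ≤ K)
    (hK2 : (d : ℤ) - ((m : ℤ) - 1) * ((n : ℤ) - 1) ≤ (K : ℤ)) :
    ¬ (∀ E : G.V → ℤ, G.Effective E → G.deg E = ((K + 1 : ℕ) : ℤ) →
      G.LinNonempty (G.pt P (d : ℤ) - E)) := by
  intro hok
  have hm1 : (1 : ℤ) ≤ m := by exact_mod_cast hm
  have hn1 : (1 : ℤ) ≤ n := by exact_mod_cast hn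
  by_cases hcase : K + 1 < m
  · -- construction 2 : all chips at one vertex of Aᶜ
    obtain ⟨b₁, hb₁⟩ : Aᶜ.Nonempty := Finset.card_pos.mp (by rw [hG.2.1]; omega)
    have hb₁A : b₁ ∉ A := Finset.mem_compl.mp hb₁
    have hb₁P : b₁ ≠ P := fun h => hb₁A (h ▸ hP)
    set E : G.V → ℤ := G.pt b₁ ((K : ℤ) + 1) with hE
    have heff : G.Effective E := eff_pt b₁ _ (by positivity)
    have hdegE : G.deg E = ((K + 1 : ℕ) : ℤ) := by rw [hE, deg_pt]; push_cast; ring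
    have hlin := hok E heff hdegE
    set f : G.V → ℤ := fun v => if v = P then (K : ℤ) + 1 else 0 with hf
    set Dt : G.V → ℤ := fun v => if v = P then (d : ℤ) - ((K : ℤ) + 1) * n
      else if v = b₁ then 0 else if v ∈ A then 0 else (K : ℤ) + 1 with hDt
    have hsAc : ∑ w ∈ Aᶜ, f w = 0 := by
      rw [sum_over_Ac hG f 0 (fun w hw => by
        have h1 : w ∉ A := Finset.mem_compl.mp hw
        have h2 : w ≠ P := fun h => h1 (h ▸ hP)
        simp only [hf]; rw [if_neg h2])]
      ring
    have hsA : ∑ w ∈ A, f w = (K : ℤ) + 1 := by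
      rw [sum_over_A hG hm hP f ((K : ℤ) + 1) 0 (by simp [hf])
        (fun w hw hwP => by simp only [hf]; rw [if_neg hwP])]
      ring
    have heq : G.pt P (d : ℤ) - E - G.lap f = Dt := by
      funext v
      simp only [Pi.sub_apply, pt_apply, lap_eq hG f v, hE, hDt]
      by_cases hv : v = P
      · have hvb : v ≠ b₁ := fun h => hb₁P (hv ▸ h.symm ▸ rfl)
        have hfv : f v = (K : ℤ) + 1 := by simp only [hf]; rw [if_pos hv]
        have hvA : v ∈ A := hv ▸ hP
        simp only [if_pos hv, if_neg hvb, if_pos hvA, hsAc, hfv]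
        ring
      · have hfv : f v = 0 := by simp only [hf]; rw [if_neg hv]
        by_cases hvA : v ∈ A
        · have hvb : v ≠ b₁ := fun h => hb₁A (h ▸ hvA)
          simp only [if_neg hv, if_neg hvb, if_pos hvA, hsAc, hfv]
          ring
        · by_cases hvb : v = b₁
          · simp only [if_neg hv, if_pos hvb, if_neg hvA, hsA, hfv]
            ring
          · simp only [if_neg hv, if_neg hvb, if_neg hvA, hsA, hfv]
            ring
    have hlin2 : G.LinNonempty Dt := by
      rw [← heq, linNonempty_shift]
      exact hlin
    have hDtP : Dt P < 0 := by
      simp only [hDt, if_pos rfl]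
      have h1 : d < n * (d / n) + n := by
        have := Nat.div_add_mod d n
        have := Nat.mod_lt d (show 0 < n by omega)
        omega
      have h2 : (d : ℤ) < (n : ℤ) * (d / n : ℕ) + n := by exact_mod_cast h1
      have h3 : ((d / n : ℕ) : ℤ) ≤ (K : ℤ) := by exact_mod_cast hK1
      nlinarith
    refine reduced_not_lin P Dt ?_ hDtP hlin2
    intro S hSne hPS
    by_cases hb₁S : b₁ ∈ S
    · refine ⟨b₁, hb₁S, ?_⟩
      have hval : Dt b₁ = 0 := by
        simp [hDt, hb₁P]
      have hadj : (G.adj b₁ P : ℤ) = 1 := by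
        rw [hG.2.2]; rw [if_pos (by tauto)]; rfl
      have hPSc : P ∈ Sᶜ := Finset.mem_compl.mpr hPS
      have hone : (1 : ℤ) ≤ ∑ w ∈ Sᶜ, (G.adj b₁ w : ℤ) := by
        calc (1 : ℤ) = (G.adj b₁ P : ℤ) := hadj.symm
          _ ≤ ∑ w ∈ Sᶜ, (G.adj b₁ w : ℤ) :=
            Finset.single_le_sum (f := fun w => (G.adj _ w : ℤ)) (fun w _ => by positivity) hPSc
      rw [hval]; linarith
    · by_cases haS : ∃ a ∈ S, a ∈ A
      · obtain ⟨a, haS', haA⟩ := haS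
        have haP : a ≠ P := fun h => hPS (h ▸ haS')
        have hab : a ≠ b₁ := fun h => hb₁A (h ▸ haA)
        refine ⟨a, haS', ?_⟩
        have hval : Dt a = 0 := by
          simp [hDt, haP, hab, haA]
        have hadj : (G.adj a b₁ : ℤ) = 1 := by
          rw [hG.2.2]; rw [if_pos (by tauto)]; rfl
        have hbSc : b₁ ∈ Sᶜ := Finset.mem_compl.mpr hb₁S
        have hone : (1 : ℤ) ≤ ∑ w ∈ Sᶜ, (G.adj a w : ℤ) := by
          calc (1 : ℤ) = (G.adj a b₁ : ℤ) := hadj.symm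
            _ ≤ ∑ w ∈ Sᶜ, (G.adj a w : ℤ) :=
              Finset.single_le_sum (f := fun w => (G.adj a w : ℤ)) (fun w _ => by positivity) hbSc
        rw [hval]; linarith
      · push_neg at haS
        obtain ⟨u, huS⟩ := hSne
        have huA : u ∉ A := fun h => haS u huS h
        have hub : u ≠ b₁ := fun h => hb₁S (h ▸ huS)
        have huP : u ≠ P := fun h => hPS (h ▸ huS)
        refine ⟨u, huS, ?_⟩
        have hval : Dt u = (K : ℤ) + 1 := by
          simp [hDt, huP, hub, huA]
        have hsub : A ⊆ Sᶜ := fun a ha => Finset.mem_compl.mpr (fun h => haS a h ha)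
        have hAm : ∑ w ∈ A, (G.adj u w : ℤ) = (m : ℤ) := by
          have : ∀ w ∈ A, (G.adj u w : ℤ) = 1 := fun w hw => by
            rw [hG.2.2]; rw [if_pos (by tauto)]; rfl
          rw [Finset.sum_congr rfl this, Finset.sum_const, hG.1, nsmul_eq_mul, mul_one]
        have hle : ∑ w ∈ A, (G.adj u w : ℤ) ≤ ∑ w ∈ Sᶜ, (G.adj u w : ℤ) :=
          Finset.sum_le_sum_of_subset_of_nonneg hsub (fun w _ _ => by positivity)
        rw [hval]
        have : ((K : ℤ) + 1) < (m : ℤ) := by exact_mod_cast hcase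
        linarith
  · -- construction 1 : chips on A
    push_neg at hcase
    set E : G.V → ℤ := fun v => if v = P then (K : ℤ) + 1 - ((m : ℤ) - 1)
      else if v ∈ A then 1 else 0 with hE
    have heff : G.Effective E := by
      intro v
      simp only [hE]
      have : (m : ℤ) ≤ (K : ℤ) + 1 := by exact_mod_cast hcase
      split
      · linarith
      · split <;> norm_num
    have hsAcE : ∑ w ∈ Aᶜ, E w = 0 := by
      rw [sum_over_Ac hG E 0 (fun w hw => by
        have h1 : w ∉ A := Finset.mem_compl.mp hw
        have h2 : w ≠ P := fun h => h1 (h ▸ hP)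
        simp only [hE]; rw [if_neg h2, if_neg h1])]
      ring
    have hsAE : ∑ w ∈ A, E w = (K : ℤ) + 1 := by
      rw [sum_over_A hG hm hP E ((K : ℤ) + 1 - ((m : ℤ) - 1)) 1 (by simp [hE])
        (fun w hw hwP => by simp only [hE]; rw [if_neg hwP, if_pos hw])]
      ring
    have hdegE : G.deg E = ((K + 1 : ℕ) : ℤ) := by
      unfold Multigraph.deg
      rw [← Finset.sum_add_sum_compl A E, hsAE, hsAcE]
      push_cast; ring
    have hlin := hok E heff hdegE
    set f : G.V → ℤ := fun v => if v = P then 2 * (m : ℤ) - 2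
      else if v ∈ A then (m : ℤ) - 2 else (m : ℤ) - 1 with hf
    set Dt : G.V → ℤ := fun v =>
      if v = P then (d : ℤ) - (K : ℤ) - 1 - ((m : ℤ) - 1) * ((n : ℤ) - 1)
      else if v ∈ A then (n : ℤ) - 1 else 0 with hDt
    have hsAc : ∑ w ∈ Aᶜ, f w = (n : ℤ) * ((m : ℤ) - 1) :=
      sum_over_Ac hG f ((m : ℤ) - 1) (fun w hw => by
        have h1 : w ∉ A := Finset.mem_compl.mp hw
        have h2 : w ≠ P := fun h => h1 (h ▸ hP)
        simp only [hf]; rw [if_neg h2, if_neg h1])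
    have hsA : ∑ w ∈ A, f w = (2 * (m : ℤ) - 2) + ((m : ℤ) - 1) * ((m : ℤ) - 2) :=
      sum_over_A hG hm hP f (2 * (m : ℤ) - 2) ((m : ℤ) - 2) (by simp [hf])
        (fun w hw hwP => by simp only [hf]; rw [if_neg hwP, if_pos hw])
    have heq : G.pt P (d : ℤ) - E - G.lap f = Dt := by
      funext v
      simp only [Pi.sub_apply, pt_apply, lap_eq hG f v, hE, hDt]
      by_cases hv : v = P
      · have hvA : v ∈ A := hv ▸ hP
        have hfv : f v = 2 * (m : ℤ) - 2 := by simp only [hf]; rw [if_pos hv]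
        simp only [if_pos hv, if_pos hvA, hsAc, hfv]
        ring
      · by_cases hvA : v ∈ A
        · have hfv : f v = (m : ℤ) - 2 := by simp only [hf]; rw [if_neg hv, if_pos hvA]
          simp only [if_neg hv, if_pos hvA, hsAc, hfv]
          ring
        · have hfv : f v = (m : ℤ) - 1 := by simp only [hf]; rw [if_neg hv, if_neg hvA]
          simp only [if_neg hv, if_neg hvA, hsA, hfv]
          ring
    have hlin2 : G.LinNonempty Dt := by
      rw [← heq, linNonempty_shift]
      exact hlin
    have hDtP : Dt P < 0 := by
      simp only [hDt, if_pos rfl]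
      linarith
    refine reduced_not_lin P Dt ?_ hDtP hlin2
    intro S hSne hPS
    by_cases hbS : ∃ b ∈ S, b ∉ A
    · obtain ⟨b, hbS', hbA⟩ := hbS
      have hbP : b ≠ P := fun h => hbA (h ▸ hP)
      refine ⟨b, hbS', ?_⟩
      have hval : Dt b = 0 := by
        simp [hDt, hbP, hbA]
      have hadj : (G.adj b P : ℤ) = 1 := by
        rw [hG.2.2]; rw [if_pos (by tauto)]; rfl
      have hPSc : P ∈ Sᶜ := Finset.mem_compl.mpr hPS
      have hone : (1 : ℤ) ≤ ∑ w ∈ Sᶜ, (G.adj b w : ℤ) := by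
        calc (1 : ℤ) = (G.adj b P : ℤ) := hadj.symm
          _ ≤ ∑ w ∈ Sᶜ, (G.adj b w : ℤ) :=
            Finset.single_le_sum (f := fun w => (G.adj _ w : ℤ)) (fun w _ => by positivity) hPSc
      rw [hval]; linarith
    · push_neg at hbS
      obtain ⟨u, huS⟩ := hSne
      have huA : u ∈ A := hbS u huS
      have huP : u ≠ P := fun h => hPS (h ▸ huS)
      refine ⟨u, huS, ?_⟩
      have hval : Dt u = (n : ℤ) - 1 := by
        simp [hDt, huP, huA]
      have hsub : Aᶜ ⊆ Sᶜ := fun b hb =>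
        Finset.mem_compl.mpr (fun h => (Finset.mem_compl.mp hb) (hbS b h))
      have hAn : ∑ w ∈ Aᶜ, (G.adj u w : ℤ) = (n : ℤ) := by
        have : ∀ w ∈ Aᶜ, (G.adj u w : ℤ) = 1 := fun w hw => by
          rw [hG.2.2]; rw [if_pos (by
            have := Finset.mem_compl.mp hw
            tauto)]; rfl
        rw [Finset.sum_congr rfl this, Finset.sum_const, hG.2.1, nsmul_eq_mul, mul_one]
      have hle : ∑ w ∈ Aᶜ, (G.adj u w : ℤ) ≤ ∑ w ∈ Sᶜ, (G.adj u w : ℤ) :=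
        Finset.sum_le_sum_of_subset_of_nonneg hsub (fun w _ _ => by positivity)
      rw [hval]
      linarith

end UB
section Final

variable {m n : ℕ} {A : Finset G.V} {P : G.V}

lemma lin_pt (P : G.V) (d : ℕ) : G.LinNonempty (G.pt P (d : ℤ)) := by
  refine ⟨0, ?_⟩
  have h0 : G.lap (0 : G.V → ℤ) = 0 := by
    funext v; rw [lap_apply]; simp
  rw [h0, sub_zero]
  exact eff_pt P _ (by positivity)

lemma rank_pt (hG : G.IsCompleteBipartite A m n) (hm : 1 ≤ m) (hn : 1 ≤ n) (hP : P ∈ A)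
    (d : ℕ) :
    G.rank (G.pt P (d : ℤ))
      = max ((d / n : ℕ) : ℤ) ((d : ℤ) - ((m : ℤ) - 1) * ((n : ℤ) - 1)) := by
  set gN : ℕ := (m - 1) * (n - 1) with hgN
  have hgcast : ((gN : ℕ) : ℤ) = ((m : ℤ) - 1) * ((n : ℤ) - 1) := by
    rw [hgN]
    push_cast [Nat.cast_sub hm, Nat.cast_sub hn]
    ring
  set K : ℕ := max (d / n) (d - gN) with hK
  have hup : G.rank (G.pt P (d : ℤ)) ≤ (K : ℤ) := by
    apply rank_le_of_not
    apply notok hG hm hn hP d K (le_max_left _ _)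
    have h1 : d - gN ≤ K := le_max_right _ _
    rw [← hgcast]
    omega
  have hlow : (K : ℤ) ≤ G.rank (G.pt P (d : ℤ)) := by
    apply le_rank_of _ K (lin_pt P d)
    rcases le_or_gt (n * K) d with h | h
    · exact okA hG hm hn hP d K h
    · apply okB hG hm hn hP d K
      have hd1 : d / n * n ≤ d := Nat.div_mul_le_self d n
      have hd2 : n * (d / n) ≤ d := by
        have : n * (d / n) = d / n * n := by ring
        omega
      have hKeq : K = d - gN := by
        rcases max_choice (d / n) (d - gN) with h' | h'
        · rw [hK, h'] at h; omega
        · rw [hK, h']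
      have hgd : gN ≤ d := by
        by_contra hc
        push_neg at hc
        have hK0 : K = 0 := by omega
        rw [hK0, mul_zero] at h
        omega
      rw [← hgcast]
      omega
  have hKcast : (K : ℤ) = max ((d / n : ℕ) : ℤ) ((d : ℤ) - ((m : ℤ) - 1) * ((n : ℤ) - 1)) := by
    rw [← hgcast, hK]
    rcases le_total gN d with h | h
    · have h1 : ((d - gN : ℕ) : ℤ) = (d : ℤ) - (gN : ℤ) := by omega
      rw [Nat.cast_max, h1]
    · have h1 : d - gN = 0 := by omega
      rw [h1]
      have h2 : (d : ℤ) - (gN : ℤ) ≤ ((d / n : ℕ) : ℤ) := by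
        have : (0:ℤ) ≤ ((d / n : ℕ) : ℤ) := by positivity
        omega
      rw [max_eq_left (Nat.zero_le _), max_eq_left h2]
  rw [← hKcast]
  exact le_antisymm hup hlow

end Final
end BNAux
set_option maxHeartbeats 1000000 in
/-- The rank Weierstrass set of `K_{m,n}` at a vertex of degree `n` is
`nℕ ∪ ((m-1)n + ℕ)`. -/
theorem Hr_completeBipartite (m n : ℕ) (hm : 1 ≤ m) (hn : 1 ≤ n) (G : Multigraph)
    (A : Finset G.V) (hG : G.IsCompleteBipartite A m n) (P : G.V) (hP : P ∈ A) :
    G.Hr P = {x : ℕ | (∃ k : ℕ, x = n * k) ∨ (m - 1) * n ≤ x} := by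
  ext x
  simp only [Multigraph.Hr, Set.mem_setOf_eq]
  rcases Nat.eq_zero_or_pos x with rfl | hx
  · -- x = 0 : both sides hold
    have h1 : G.rank (G.pt P (((0:ℕ) : ℤ) - 1)) = -1 := by
      apply BNAux.rank_neg_one
      rw [BNAux.deg_pt]
      norm_num
    have h2 : (0:ℤ) ≤ G.rank (G.pt P ((0:ℕ) : ℤ)) :=
      BNAux.rank_nonneg _ (BNAux.lin_pt P 0)
    refine iff_of_true (by push_cast at h1 h2 ⊢; omega) (Or.inl ⟨0, by ring⟩)
  · -- x ≥ 1
    have ex : (x : ℤ) - 1 = ((x - 1 : ℕ) : ℤ) := by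
      push_cast; omega
    rw [ex, BNAux.rank_pt hG hm hn hP (x - 1), BNAux.rank_pt hG hm hn hP x]
    set q : ℕ := x / n with hq
    set s : ℕ := x % n with hsdef
    have hqs : n * q + s = x := Nat.div_add_mod x n
    have hqs' : q * n + s = x := by rw [mul_comm] at hqs; exact hqs
    have hslt : s < n := Nat.mod_lt x (by omega)
    -- integer abbreviations and facts
    have hM : (1 : ℤ) ≤ (m : ℤ) := by exact_mod_cast hm
    have hN : (1 : ℤ) ≤ (n : ℤ) := by exact_mod_cast hn
    have hX : (1 : ℤ) ≤ (x : ℤ) := by exact_mod_cast hx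
    have hX1 : ((x - 1 : ℕ) : ℤ) = (x : ℤ) - 1 := by push_cast; omega
    have hQS : (n : ℤ) * (q : ℤ) + (s : ℤ) = (x : ℤ) := by exact_mod_cast hqs
    have hSlt : (s : ℤ) < (n : ℤ) := by exact_mod_cast hslt
    have hS0 : (0 : ℤ) ≤ (s : ℤ) := by positivity
    have hcastBig : (((m - 1) * n : ℕ) : ℤ) = ((m : ℤ) - 1) * (n : ℤ) := by
      push_cast [Nat.cast_sub hm]; ring
    by_cases hs0 : s = 0
    · -- x is a multiple of n : jump always happens
      have hqpos : 1 ≤ q := by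
        rcases Nat.eq_zero_or_pos q with h | h
        · rw [h, mul_zero] at hqs; omega
        · exact h
      have hdiv : (x - 1) / n = q - 1 := by
        have hxq : q * n = x := by omega
        apply Nat.div_eq_of_lt_le
        · have e1 : (q - 1) * n = q * n - n := by
            rw [Nat.sub_mul, one_mul]
          rw [e1, hxq]
          omega
        · have e2 : (q - 1 + 1) = q := by omega
          rw [e2, hxq]
          omega
      refine iff_of_true ?_ (Or.inl ⟨q, by omega⟩)
      rw [hdiv]
      apply max_lt_max
      · have : ((q - 1 : ℕ) : ℤ) = (q : ℤ) - 1 := by push_cast; omega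
        rw [this]; linarith
      · rw [hX1]; linarith
    · -- x is not a multiple of n
      have hs1 : 1 ≤ s := by omega
      have hn2 : (2 : ℤ) ≤ (n : ℤ) := by
        have : 2 ≤ n := by omega
        exact_mod_cast this
      have hS1 : (1 : ℤ) ≤ (s : ℤ) := by exact_mod_cast hs1
      have hdiv : (x - 1) / n = q := by
        apply Nat.div_eq_of_lt_le
        · have h1 : q * n < x := by
            have : q * n + 1 ≤ q * n + s := by omega
            omega
          omega
        · have h2 : x ≤ (q + 1) * n := by
            have e1 : (q + 1) * n = q * n + n := by ring
            omega
          omega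
      rw [hdiv]
      by_cases hbig : (m - 1) * n ≤ x
      · -- big case : jump happens
        have hBigZ : ((m : ℤ) - 1) * (n : ℤ) ≤ (x : ℤ) := by
          rw [← hcastBig]; exact_mod_cast hbig
        -- q ≥ m - 1
        have hq1 : ((m : ℤ) - 2) * (n : ℤ) < (q : ℤ) * (n : ℤ) := by nlinarith
        have hq2 : (m : ℤ) - 2 < (q : ℤ) :=
          lt_of_mul_lt_mul_right hq1 (by linarith)
        have hkey : (q : ℤ) < (x : ℤ) - ((m : ℤ) - 1) * ((n : ℤ) - 1) := by
          have haux : (0 : ℤ) ≤ ((q : ℤ) - ((m : ℤ) - 1)) * ((n : ℤ) - 1) :=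
            mul_nonneg (by linarith) (by linarith)
          nlinarith
        refine iff_of_true ?_ (Or.inr hbig)
        have h3 : max ((q : ℤ)) (((x - 1 : ℕ) : ℤ) - ((m : ℤ) - 1) * ((n : ℤ) - 1))
            < (x : ℤ) - ((m : ℤ) - 1) * ((n : ℤ) - 1) := by
          apply max_lt hkey
          rw [hX1]; linarith
        exact lt_of_lt_of_le h3 (le_max_right _ _)
      · -- small case : no jump
        refine iff_of_false ?_ ?_
        · -- show ranks are equal (both maxes equal q)
          have hsmall : (x : ℤ) < ((m : ℤ) - 1) * (n : ℤ) := by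
            rw [← hcastBig]
            exact_mod_cast (by omega : x < (m - 1) * n)
          have hq1 : (q : ℤ) * (n : ℤ) < ((m : ℤ) - 1) * (n : ℤ) := by nlinarith
          have hq2 : (q : ℤ) < (m : ℤ) - 1 :=
            lt_of_mul_lt_mul_right hq1 (by linarith)
          have hkey : (x : ℤ) - ((m : ℤ) - 1) * ((n : ℤ) - 1) ≤ (q : ℤ) := by
            have haux : (0 : ℤ) ≤ (((m : ℤ) - 2) - (q : ℤ)) * ((n : ℤ) - 1) :=
              mul_nonneg (by linarith) (by linarith)
            nlinarith
          apply not_lt.mpr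
          apply max_le
          · exact le_max_left _ _
          · exact le_trans hkey (le_max_left _ _)
        · rintro (⟨k, hk⟩ | hbig')
          · have : x % n = 0 := by rw [hk]; exact Nat.mul_mod_right n k
            omega
          · exact hbig hbig'
end
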